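/- Let Z₁,…,Z_{n_z} be k×k complex Hermitian matrices with Zⱼ² = Zⱼ for each j and Σⱼ Zⱼ = I, and define 𝒵(δ) := Σⱼ Zⱼ δ Zⱼ. Then for every k×k Hermitian positive definite matrix δ, Tr(δ · ln(𝒵(δ))) = Tr(𝒵(δ) · ln(𝒵(δ))), where ln(M) for a Hermitian positive definite matrix M with spectral decomposition M = U Diag(λ₁,…,λ_k) U* is defined as U Diag(ln λ₁,…,ln λ_k) U*. -/

import Mathlib

open Matrix
open scoped ComplexOrder

/-- The matrix extension `F` of `f : ℝ → ℝ`: for Hermitian `A = U Diag(λ) U*`,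
`F(A) := U Diag(f(λᵢ)) U*` (junk value `0` if `A` is not Hermitian). In particular,
`matExt Real.log M` is the matrix logarithm `ln(M)` of a positive definite matrix `M`. -/
noncomputable def matExt {𝕜 : Type*} [RCLike 𝕜] {n : Type*} [Fintype n] [DecidableEq n]
    (f : ℝ → ℝ) (A : Matrix n n 𝕜) : Matrix n n 𝕜 :=
  if hA : A.IsHermitian then
    (hA.eigenvectorUnitary : Matrix n n 𝕜) *
      Matrix.diagonal (fun i => (f (hA.eigenvalues i) : 𝕜)) *
      star (hA.eigenvectorUnitary : Matrix n n 𝕜)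
  else 0

lemma quad_sum {k nz : ℕ} (f : Fin nz → Matrix (Fin k) (Fin k) ℂ) (x : Fin k → ℂ) :
    star x ⬝ᵥ (∑ i, f i) *ᵥ x = ∑ i, star x ⬝ᵥ (f i) *ᵥ x := by
  have hmv : (∑ i, f i) *ᵥ x = ∑ i, f i *ᵥ x := by
    funext r
    simp only [mulVec, dotProduct, Matrix.sum_apply, Finset.sum_mul, Finset.sum_apply]
    exact Finset.sum_comm
  rw [hmv]
  simp only [dotProduct, Finset.sum_apply, Finset.mul_sum]
  exact Finset.sum_comm

lemma psd_eq_zero_of_forms {k : ℕ} {A : Matrix (Fin k) (Fin k) ℂ} (hA : A.PosSemidef)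
    (h : ∀ x, star x ⬝ᵥ A *ᵥ x = 0) : A = 0 := by
  have h' : ∀ x, A *ᵥ x = 0 := fun x => (hA.dotProduct_mulVec_zero_iff x).mp (h x)
  ext i j
  have := congrFun (h' (Pi.single j 1)) i
  simpa [mulVec_single] using this

lemma Z_orth {k nz : ℕ} (Z : Fin nz → Matrix (Fin k) (Fin k) ℂ)
    (hZherm : ∀ j, (Z j).IsHermitian) (hZidem : ∀ j, Z j * Z j = Z j)
    (hZsum : ∑ j, Z j = 1) {i j : Fin nz} (hij : i ≠ j) : Z i * Z j = 0 := by
  have hform : ∀ i' j' : Fin nz, (Z j') * Z i' * (Z j') = (Z i' * Z j')ᴴ * (Z i' * Z j') := by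
    intro i' j'
    rw [conjTranspose_mul, (hZherm i').eq, (hZherm j').eq, ← mul_assoc,
      mul_assoc (Z j') (Z i') (Z i'), hZidem i']
  have hpsd : ∀ i' j' : Fin nz, ((Z j') * Z i' * (Z j')).PosSemidef := by
    intro i' j'
    rw [hform]; exact posSemidef_conjTranspose_mul_self _
  have hsum : ∑ i', (Z j) * Z i' * (Z j) = Z j := by
    have h : ∑ i', (Z j) * Z i' * (Z j) = Z j * (∑ i', Z i') * Z j := by
      rw [Finset.mul_sum, Finset.sum_mul]
    rw [h, hZsum, mul_one, hZidem]
  have key : (Z j) * Z i * (Z j) = 0 := by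
    apply psd_eq_zero_of_forms (hpsd i j)
    intro x
    have hterm : ∀ i', 0 ≤ star x ⬝ᵥ ((Z j) * Z i' * (Z j)) *ᵥ x := fun i' => (hpsd i' j).dotProduct_mulVec_nonneg x
    have h0 : ∑ i', star x ⬝ᵥ ((Z j) * Z i' * (Z j)) *ᵥ x
        = star x ⬝ᵥ ((Z j) * Z j * (Z j)) *ᵥ x := by
      rw [← quad_sum, hsum, hZidem, hZidem]
    have hsplit : (∑ i' ∈ Finset.univ.erase j, star x ⬝ᵥ ((Z j) * Z i' * (Z j)) *ᵥ x)
        + star x ⬝ᵥ ((Z j) * Z j * (Z j)) *ᵥ x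
        = star x ⬝ᵥ ((Z j) * Z j * (Z j)) *ᵥ x := by
      rw [Finset.sum_erase_add Finset.univ _ (Finset.mem_univ j), h0]
    have herase : ∑ i' ∈ Finset.univ.erase j, star x ⬝ᵥ ((Z j) * Z i' * (Z j)) *ᵥ x = 0 :=
      add_eq_right.mp hsplit
    exact (Finset.sum_eq_zero_iff_of_nonneg
      (fun i' _ => hterm i')).mp herase i (Finset.mem_erase.mpr ⟨hij, Finset.mem_univ i⟩)
  rw [hform] at key
  exact conjTranspose_mul_self_eq_zero.mp key

/-- If `X` commutes with a Hermitian matrix `A`, it commutes with `matExt f A`. -/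
lemma commute_matExt {k : ℕ} (f : ℝ → ℝ) {A X : Matrix (Fin k) (Fin k) ℂ}
    (hA : A.IsHermitian) (hcomm : X * A = A * X) :
    X * matExt f A = matExt f A * X := by
  rw [matExt, dif_pos hA]
  set U : Matrix (Fin k) (Fin k) ℂ := (hA.eigenvectorUnitary : Matrix (Fin k) (Fin k) ℂ) with hU
  have hUU : star U * U = 1 := (Matrix.mem_unitaryGroup_iff').mp hA.eigenvectorUnitary.2
  have hUU' : U * star U = 1 := (Matrix.mem_unitaryGroup_iff).mp hA.eigenvectorUnitary.2
  set D : Matrix (Fin k) (Fin k) ℂ := diagonal (RCLike.ofReal ∘ hA.eigenvalues) with hD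
  set Df : Matrix (Fin k) (Fin k) ℂ :=
    diagonal (fun i => (RCLike.ofReal (f (hA.eigenvalues i)) : ℂ)) with hDf
  have hspec : A = U * D * star U := hA.spectral_theorem
  set Y : Matrix (Fin k) (Fin k) ℂ := star U * X * U with hY
  have e1 : Y * D = star U * (X * A) * U := by
    rw [hspec]
    simp only [hY, Matrix.mul_assoc, hUU, Matrix.mul_one]
  have e2 : D * Y = star U * (A * X) * U := by
    rw [hspec]
    simp only [hY, Matrix.mul_assoc]
    rw [← Matrix.mul_assoc (star U) U, hUU, Matrix.one_mul]
  have hXdiag : Y * D = D * Y := by rw [e1, hcomm, ← e2]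
  have hfdiag : Y * Df = Df * Y := by
    ext a b
    simp only [hDf, mul_diagonal, diagonal_mul]
    by_cases hab : hA.eigenvalues a = hA.eigenvalues b
    · rw [hab]; ring
    · have hY0 : Y a b = 0 := by
        have h := congrFun (congrFun hXdiag a) b
        simp only [hD, mul_diagonal, diagonal_mul, Function.comp_apply] at h
        by_contra hne
        have h2 : ((RCLike.ofReal (hA.eigenvalues b) : ℂ)
            - (RCLike.ofReal (hA.eigenvalues a) : ℂ)) * Y a b = 0 := by
          linear_combination h
        rcases mul_eq_zero.mp h2 with h3 | h3
        · exact hab (RCLike.ofReal_inj.mp (sub_eq_zero.mp h3)).symm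
        · exact hne h3
      rw [hY0]; ring
  have e3 : U * (Y * Df) * star U = X * (U * Df * star U) := by
    simp only [hY, Matrix.mul_assoc]
    rw [← Matrix.mul_assoc U (star U), hUU', Matrix.one_mul]
  have e4 : U * (Df * Y) * star U = (U * Df * star U) * X := by
    simp only [hY, Matrix.mul_assoc, hUU', Matrix.mul_one]
  rw [← e3, hfdiag, e4]

/-- If `Z₁,…,Z_{n_z}` are Hermitian idempotents summing to the identity and
`𝒵(δ) := Σⱼ Zⱼ δ Zⱼ`, then for every Hermitian positive definite `δ`,
`Tr(δ ln(𝒵(δ))) = Tr(𝒵(δ) ln(𝒵(δ)))`. -/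
theorem trace_ln_Zmap {k nz : ℕ} (Z : Fin nz → Matrix (Fin k) (Fin k) ℂ)
    (hZherm : ∀ j, (Z j).IsHermitian) (hZidem : ∀ j, Z j * Z j = Z j)
    (hZsum : ∑ j, Z j = 1)
    (δ : Matrix (Fin k) (Fin k) ℂ) (hδ : δ.PosDef) :
    (δ * matExt Real.log (∑ j, Z j * δ * Z j)).trace
      = ((∑ j, Z j * δ * Z j) * matExt Real.log (∑ j, Z j * δ * Z j)).trace := by
  set M : Matrix (Fin k) (Fin k) ℂ := ∑ j, Z j * δ * Z j with hM
  have hMherm : M.IsHermitian := by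
    rw [Matrix.IsHermitian, hM, conjTranspose_sum]
    refine Finset.sum_congr rfl fun j _ => ?_
    rw [conjTranspose_mul, conjTranspose_mul, (hZherm j).eq, hδ.1.eq, Matrix.mul_assoc]
  set L : Matrix (Fin k) (Fin k) ℂ := matExt Real.log M with hL
  have horth : ∀ {i j : Fin nz}, i ≠ j → Z i * Z j = 0 :=
    fun hij => Z_orth Z hZherm hZidem hZsum hij
  have hcommM : ∀ j, Z j * M = M * Z j := by
    intro j
    have h1 : Z j * M = Z j * δ * Z j := by
      rw [hM, Finset.mul_sum]
      rw [Finset.sum_eq_single j]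
      · rw [← Matrix.mul_assoc, ← Matrix.mul_assoc, hZidem j]
      · intro i _ hi
        rw [← Matrix.mul_assoc, ← Matrix.mul_assoc, horth (Ne.symm hi), Matrix.zero_mul,
          Matrix.zero_mul]
      · intro h; exact absurd (Finset.mem_univ j) h
    have h2 : M * Z j = Z j * δ * Z j := by
      rw [hM, Finset.sum_mul]
      rw [Finset.sum_eq_single j]
      · rw [Matrix.mul_assoc, Matrix.mul_assoc, hZidem j, ← Matrix.mul_assoc]
      · intro i _ hi
        rw [Matrix.mul_assoc, Matrix.mul_assoc, horth hi, Matrix.mul_zero, Matrix.mul_zero]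
      · intro h; exact absurd (Finset.mem_univ j) h
    rw [h1, h2]
  have hcommL : ∀ j, Z j * L = L * Z j := fun j => commute_matExt Real.log hMherm (hcommM j)
  -- per-term trace identity
  have hterm : ∀ j, (Z j * δ * Z j * L).trace = (δ * (Z j * L)).trace := by
    intro j
    have : Z j * δ * Z j * L = Z j * (δ * (Z j * L)) := by
      simp only [Matrix.mul_assoc]
    rw [this, Matrix.trace_mul_comm]
    congr 1
    have : Z j * L * Z j = Z j * L := by
      rw [hcommL j, Matrix.mul_assoc, hZidem j, ← hcommL j]
    calc δ * (Z j * L) * Z j = δ * (Z j * L * Z j) := by simp only [Matrix.mul_assoc]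
      _ = δ * (Z j * L) := by rw [this]
  calc (δ * L).trace
      = (δ * (1 * L)).trace := by rw [Matrix.one_mul]
    _ = (δ * ((∑ j, Z j) * L)).trace := by rw [hZsum]
    _ = ∑ j, (δ * (Z j * L)).trace := by
        rw [Finset.sum_mul, Finset.mul_sum, trace_sum]
    _ = ∑ j, (Z j * δ * Z j * L).trace := by
        exact Finset.sum_congr rfl fun j _ => (hterm j).symm
    _ = (M * L).trace := by rw [hM, Finset.sum_mul, trace_sum]
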